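/- The strict first-order KBO on ground terms is well-founded: there is no infinite descending chain t0 >_kbo t1 >_kbo t2 >_kbo ⋯. -/

import Mathlib

/-- Ground first-order terms over a signature `σ`: a symbol applied to a list
of ground terms. -/
inductive GTerm (σ : Type) : Type where
  | app : σ → List (GTerm σ) → GTerm σ

mutual
/-- KBO weight: `W (f s₁ ⋯ sₘ) = w f + Σᵢ k f i * W sᵢ` (arguments are
numbered starting from 1). -/
def GTerm.W {σ : Type} (w : σ → ℕ) (k : σ → ℕ → ℕ) : GTerm σ → ℕ
  | .app f args => w f + GTerm.sumW w k f 1 args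
/-- Weighted sum of the arguments of a symbol `f`, starting at index `i`. -/
def GTerm.sumW {σ : Type} (w : σ → ℕ) (k : σ → ℕ → ℕ) :
    σ → ℕ → List (GTerm σ) → ℕ
  | _, _, [] => 0
  | f, i, t :: ts => k f i * GTerm.W w k t + GTerm.sumW w k f (i + 1) ts
end

mutual
/-- The strict first-order KBO on ground terms: `t >kbo s` iff (1) `W t > W s`;
or (2) `W t = W s` and the head of `t` is greater in the precedence than the
head of `s`; or (3) `W t = W s`, the heads agree, and the argument tuples
compare lexicographically under `>kbo`. -/
inductive KBO {σ : Type} (w : σ → ℕ) (k : σ → ℕ → ℕ) (prec : σ → σ → Prop) :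
    GTerm σ → GTerm σ → Prop where
  | weight {t s} : GTerm.W w k s < GTerm.W w k t → KBO w k prec t s
  | heads {g f ts ss} : GTerm.W w k (.app g ts) = GTerm.W w k (.app f ss) →
      prec g f → KBO w k prec (.app g ts) (.app f ss)
  | args {g ts ss} : GTerm.W w k (.app g ts) = GTerm.W w k (.app g ss) →
      KBOLex w k prec ts ss → KBO w k prec (.app g ts) (.app g ss)
/-- Lexicographic extension of KBO to argument tuples: the first components
compare strictly, or they are equal and the tails compare lexicographically. -/
inductive KBOLex {σ : Type} (w : σ → ℕ) (k : σ → ℕ → ℕ) (prec : σ → σ → Prop) :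
    List (GTerm σ) → List (GTerm σ) → Prop where
  | rel {t s ts ss} : KBO w k prec t s → KBOLex w k prec (t :: ts) (s :: ss)
  | tail {t ts ss} : KBOLex w k prec ts ss → KBOLex w k prec (t :: ts) (t :: ss)
end

def KBOLexS {σ : Type} (w : σ → ℕ) (k : σ → ℕ → ℕ) (prec : σ → σ → Prop)
    (f : σ) (i : ℕ) : List (GTerm σ) → List (GTerm σ) → Prop :=
  fun ss ts => KBOLex w k prec ts ss ∧ GTerm.sumW w k f i ts = GTerm.sumW w k f i ss

lemma GTerm.W_pos {σ : Type} (w : σ → ℕ) (k : σ → ℕ → ℕ) (hw : ∀ f, 1 ≤ w f) :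
    ∀ t : GTerm σ, 1 ≤ GTerm.W w k t := by
  intro t
  cases t with
  | app f args =>
    have : GTerm.W w k (.app f args) = w f + GTerm.sumW w k f 1 args := rfl
    rw [this]
    exact le_trans (hw f) (Nat.le_add_right _ _)

lemma GTerm.mem_W_le {σ : Type} (w : σ → ℕ) (k : σ → ℕ → ℕ) (hk : ∀ f i, 1 ≤ k f i) :
    ∀ (ts : List (GTerm σ)) (f : σ) (i : ℕ) (t : GTerm σ), t ∈ ts →
      GTerm.W w k t ≤ GTerm.sumW w k f i ts := by
  intro ts
  induction ts with
  | nil => intro f i t ht; cases ht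
  | cons a as ih =>
    intro f i t ht
    have hsum : GTerm.sumW w k f i (a :: as)
        = k f i * GTerm.W w k a + GTerm.sumW w k f (i+1) as := rfl
    rw [hsum]
    cases ht with
    | head => calc GTerm.W w k a = 1 * GTerm.W w k a := (one_mul _).symm
        _ ≤ k f i * GTerm.W w k a := Nat.mul_le_mul_right _ (hk f i)
        _ ≤ _ := Nat.le_add_right _ _
    | tail _ hmem => exact le_trans (ih f (i+1) t hmem) (Nat.le_add_left _ _)

/-- The strict first-order KBO on ground terms is well-founded: there is no
infinite descending chain `t₀ >kbo t₁ >kbo t₂ >kbo ⋯`. -/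
theorem KBO_wellFounded {σ : Type} (w : σ → ℕ) (k : σ → ℕ → ℕ)
    (prec : σ → σ → Prop)
    (hw : ∀ f, 1 ≤ w f) (hk : ∀ f i, 1 ≤ k f i)
    (hprec_irrefl : ∀ f, ¬ prec f f)
    (hprec_trans : ∀ f g h, prec f g → prec g h → prec f h)
    (hprec_total : ∀ f g, f ≠ g → prec f g ∨ prec g f)
    (hprec_wf : WellFounded (fun f g => prec g f)) :
    ¬ ∃ ts : ℕ → GTerm σ, ∀ i, KBO w k prec (ts i) (ts (i + 1)) := by
  set R : GTerm σ → GTerm σ → Prop := fun s t => KBO w k prec t s with hR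
  have key : ∀ m : ℕ, ∀ t : GTerm σ, GTerm.W w k t = m → Acc R t := by
    intro m
    induction m using Nat.strong_induction_on with
    | _ m H =>
      have Hlt : ∀ u : GTerm σ, GTerm.W w k u < m → Acc R u :=
        fun u h => H _ h u rfl
      -- accessibility of argument lists under the sum-preserving lex extension
      have lexAcc : ∀ n : ℕ, ∀ (f : σ) (i : ℕ) (ts : List (GTerm σ)),
          GTerm.sumW w k f i ts = n → n < m → (∀ t ∈ ts, Acc R t) →
          Acc (KBOLexS w k prec f i) ts := by
        intro n
        induction n using Nat.strong_induction_on with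
        | _ n IHn =>
          intro f i ts hsum hnm hmem
          cases ts with
          | nil =>
            constructor
            rintro ss ⟨hlex, -⟩
            cases hlex
          | cons t ts' =>
            have hsum' : k f i * GTerm.W w k t + GTerm.sumW w k f (i+1) ts' = n := hsum
            have accT : Acc R t := hmem t List.mem_cons_self
            have hkt : 1 ≤ k f i * GTerm.W w k t :=
              Nat.mul_pos (hk f i) (GTerm.W_pos w k hw t)
            have accTail : Acc (KBOLexS w k prec f (i+1)) ts' := by
              apply IHn (GTerm.sumW w k f (i+1) ts') (by omega) f (i+1) ts' rfl
                (by omega)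
              intro u hu; exact hmem u (List.mem_cons_of_mem _ hu)
            have D : ∀ t : GTerm σ, Acc R t →
                ∀ ts' : List (GTerm σ), Acc (KBOLexS w k prec f (i+1)) ts' →
                k f i * GTerm.W w k t + GTerm.sumW w k f (i+1) ts' = n →
                Acc (KBOLexS w k prec f i) (t :: ts') := by
              clear hsum hsum' accT accTail hmem hkt t ts'
              intro t accT
              induction accT with
              | intro t _ IHt =>
                intro ts' accTs
                induction accTs with
                | intro ts' accTs' IHts =>
                  intro hsum'
                  constructor
                  rintro ss ⟨hlex, hseq⟩
                  cases hlex with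
                  | @rel _ s _ ss' hst =>
                    have hseq' : k f i * GTerm.W w k t + GTerm.sumW w k f (i+1) ts'
                        = k f i * GTerm.W w k s + GTerm.sumW w k f (i+1) ss' := hseq
                    have hks : 1 ≤ k f i * GTerm.W w k s :=
                      Nat.mul_pos (hk f i) (GTerm.W_pos w k hw s)
                    have hlt : GTerm.sumW w k f (i+1) ss' < n := by omega
                    have accSs : Acc (KBOLexS w k prec f (i+1)) ss' := by
                      apply IHn _ hlt f (i+1) ss' rfl (by omega)
                      intro u hu
                      exact Hlt u (lt_of_le_of_lt
                        (GTerm.mem_W_le w k hk ss' f (i+1) u hu) (by omega))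
                    exact IHt s hst ss' accSs (by omega)
                  | @tail _ _ ss' hlex' =>
                    have hseq' : k f i * GTerm.W w k t + GTerm.sumW w k f (i+1) ts'
                        = k f i * GTerm.W w k t + GTerm.sumW w k f (i+1) ss' := hseq
                    have htails : GTerm.sumW w k f (i+1) ts'
                        = GTerm.sumW w k f (i+1) ss' := by omega
                    exact IHts ss' ⟨hlex', htails⟩ (by omega)
            exact D t accT ts' accTail hsum'
      -- accessibility of terms of weight exactly m, by induction on head & args
      have E : ∀ g : σ, Acc (fun a b => prec b a) g →
          ∀ ts : List (GTerm σ), Acc (KBOLexS w k prec g 1) ts →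
          GTerm.W w k (.app g ts) = m → Acc R (.app g ts) := by
        intro g accg
        induction accg with
        | intro g _ IHg =>
          intro ts accts
          induction accts with
          | intro ts _ IHts =>
            intro hWm
            constructor
            intro s hRs
            cases hRs with
            | weight h => exact Hlt s (by omega)
            | @heads _ f _ ss hWeq hpr =>
              have hWss : GTerm.W w k (GTerm.app f ss) = m := by omega
              have hsum : w f + GTerm.sumW w k f 1 ss = m := hWss
              have hlt : GTerm.sumW w k f 1 ss < m := by
                have := hw f; omega
              apply IHg f hpr ss _ hWss
              apply lexAcc _ f 1 ss rfl hlt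
              intro u hu
              exact Hlt u (lt_of_le_of_lt (GTerm.mem_W_le w k hk ss f 1 u hu) hlt)
            | @args _ _ ss hWeq hlex =>
              have h1 : w g + GTerm.sumW w k g 1 ts = m := hWm
              have h2 : w g + GTerm.sumW w k g 1 ts = w g + GTerm.sumW w k g 1 ss := hWeq
              exact IHts ss ⟨hlex, by omega⟩ (by
                show w g + GTerm.sumW w k g 1 ss = m
                omega)
      intro t hWt
      cases t with
      | app g ts =>
        have hsum : w g + GTerm.sumW w k g 1 ts = m := hWt
        have hlt : GTerm.sumW w k g 1 ts < m := by have := hw g; omega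
        apply E g (hprec_wf.apply g) ts _ hWt
        apply lexAcc _ g 1 ts rfl hlt
        intro u hu
        exact Hlt u (lt_of_le_of_lt (GTerm.mem_W_le w k hk ts g 1 u hu) hlt)
  rintro ⟨ts, hts⟩
  have noChain : ∀ t : GTerm σ, Acc R t → ∀ s : ℕ → GTerm σ, s 0 = t →
      (∀ i, KBO w k prec (s i) (s (i + 1))) → False := by
    intro t h
    induction h with
    | intro t _ IH =>
      intro s h0 hs
      exact IH (s 1) (by rw [hR]; rw [← h0] at *; exact hs 0)
        (fun n => s (n + 1)) rfl (fun i => hs (i + 1))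
  exact noChain (ts 0) (key _ (ts 0) rfl) ts rfl hts
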